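/- Let n ≥ 2, let S(t) := G(t) [G(t)/t]^{−1/n} for t > 0, and F(t) := [S(t)]ⁿ, and let F* denote the Young conjugate F*(α) := sup_{σ>0} (ασ − F(σ)). Then for every α > 0 one has F*(α^{n−1}) ≤ [ S(G^{−1}(α)) ]ⁿ, where G^{−1} is the inverse of G. -/

import Mathlib

open MeasureTheory Real

noncomputable section

/-- With `S(t) := G(t)[G(t)/t]^{−1/n}` and `F(t) := S(t)ⁿ`, the Young
conjugate `F*(α) := sup_{σ>0} (ασ − F(σ))` satisfies `F*(α^{n−1}) ≤ [S(G^{−1}(α))]ⁿ` for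
every `α > 0`; formulated without `sSup`, `α^{n−1}σ − F(σ) ≤ [S(G^{−1}(α))]ⁿ` for all `σ > 0`. -/
theorem stmt11
    (n : ℕ) (hn : 2 ≤ n)
    (g g' : ℝ → ℝ) (ig sg : ℝ)
    (hgpos : ∀ t, 0 < t → 0 < g t) (hg0 : g 0 = 0)
    (hgdiff : ∀ t, 0 < t → HasDerivAt g (g' t) t)
    (hg'cont : ContinuousOn g' (Set.Ioi (0:ℝ)))
    (hig : 1 ≤ ig) (higsg : ig ≤ sg)
    (hlow : ∀ t, 0 < t → ig ≤ t * g' t / g t)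
    (hupp : ∀ t, 0 < t → t * g' t / g t ≤ sg)
    (G : ℝ → ℝ) (hG : ∀ t, G t = ∫ τ in (0:ℝ)..t, g τ)
    (Ginv : ℝ → ℝ)
    (hGinv₁ : ∀ t, 0 ≤ t → Ginv (G t) = t) (hGinv₂ : ∀ s, 0 ≤ s → G (Ginv s) = s)
    (S F : ℝ → ℝ)
    (hS : ∀ t, 0 < t → S t = G t * (G t / t) ^ (-(1:ℝ) / n))
    (hF : ∀ t, 0 < t → F t = S t ^ (n : ℕ)) :
    ∀ α : ℝ, 0 < α → ∀ σ : ℝ, 0 < σ →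
      α ^ ((n : ℝ) - 1) * σ - F σ ≤ S (Ginv α) ^ (n : ℕ) := by
  intro α hα σ hσ
  -- g' is positive on (0,∞)
  have hg'pos : ∀ t, 0 < t → 0 < g' t := by
    intro t ht
    have h1 : (1:ℝ) ≤ t * g' t / g t := le_trans hig (hlow t ht)
    have hg := hgpos t ht
    have h2 : g t ≤ t * g' t := (one_le_div hg).mp h1
    nlinarith
  -- g is monotone on [0,∞)
  have hgmono : MonotoneOn g (Set.Ici (0:ℝ)) := by
    have hsm : StrictMonoOn g (Set.Ioi (0:ℝ)) := by
      apply strictMonoOn_of_deriv_pos (convex_Ioi 0)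
      · intro x hx
        exact (hgdiff x hx).continuousAt.continuousWithinAt
      · intro x hx
        rw [interior_Ioi] at hx
        rw [(hgdiff x hx).deriv]
        exact hg'pos x hx
    intro x hx y hy hxy
    rcases eq_or_lt_of_le (Set.mem_Ici.mp hx) with h | h
    · rcases eq_or_lt_of_le (Set.mem_Ici.mp hy) with h' | h'
      · rw [← h, ← h', hg0]
      · rw [← h, hg0]; exact (hgpos y h').le
    · rcases eq_or_lt_of_le hxy with h' | h'
      · rw [h']
      · exact (hsm h (lt_trans h h') h').le
  have hgnn : ∀ t, 0 ≤ t → 0 ≤ g t := by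
    intro t ht
    rcases eq_or_lt_of_le ht with h | h
    · rw [← h, hg0]
    · exact (hgpos t h).le
  -- interval integrability of g on subintervals of [0,∞)
  have hInt : ∀ a b : ℝ, 0 ≤ a → 0 ≤ b → IntervalIntegrable g volume a b := by
    intro a b ha hb
    apply MonotoneOn.intervalIntegrable
    apply hgmono.mono
    intro x hx
    exact le_trans (le_min ha hb) hx.1
  -- G is monotone on [0,∞)
  have hGmono : ∀ x y : ℝ, 0 ≤ x → x ≤ y → G x ≤ G y := by
    intro x y hx hxy
    have hy : (0:ℝ) ≤ y := le_trans hx hxy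
    rw [hG x, hG y, ← intervalIntegral.integral_add_adjacent_intervals (hInt 0 x le_rfl hx)
      (hInt x y hx hy)]
    have : 0 ≤ ∫ τ in x..y, g τ := by
      apply intervalIntegral.integral_nonneg hxy
      intro u hu
      exact hgnn u (le_trans hx hu.1)
    linarith
  -- G is positive on (0,∞)
  have hGpos : ∀ t, 0 < t → 0 < G t := by
    intro t ht
    rw [hG t]
    apply intervalIntegral.intervalIntegral_pos_of_pos_on (hInt 0 t le_rfl ht.le) _ ht
    intro x hx
    exact hgpos x hx.1
  have hG0 : G 0 = 0 := by rw [hG 0, intervalIntegral.integral_same]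
  -- find t₀ > 0 with G t₀ = α, so that Ginv α = t₀ > 0
  have hg1 : 0 < g 1 := hgpos 1 one_pos
  set T : ℝ := 1 + α / g 1 with hT
  have hT1 : (1:ℝ) < T := by
    rw [hT]
    have : 0 < α / g 1 := div_pos hα hg1
    linarith
  have hGT : α ≤ G T := by
    have h1 : ∫ τ in (1:ℝ)..T, g 1 ≤ ∫ τ in (1:ℝ)..T, g τ := by
      apply intervalIntegral.integral_mono_on hT1.le intervalIntegrable_const
        (hInt 1 T zero_le_one (by linarith))
      intro x hx
      exact hgmono (by norm_num) (by simp only [Set.mem_Ici]; linarith [hx.1]) hx.1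
    rw [intervalIntegral.integral_const, smul_eq_mul] at h1
    have h2 : (T - 1) * g 1 = α := by
      rw [hT]
      field_simp
      ring
    have h3 : G 1 ≤ G T := hGmono 1 T zero_le_one hT1.le
    have h4 : G T = G 1 + ∫ τ in (1:ℝ)..T, g τ := by
      rw [hG T, hG 1, intervalIntegral.integral_add_adjacent_intervals
        (hInt 0 1 le_rfl zero_le_one) (hInt 1 T zero_le_one (by linarith))]
    have h5 : 0 ≤ G 1 := by rw [← hG0]; exact hGmono 0 1 le_rfl zero_le_one
    rw [h4]; linarith
  have hGcont : ContinuousOn G (Set.Icc (0:ℝ) T) := by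
    have := intervalIntegral.continuousOn_primitive_interval'
      (μ := volume) (f := g) (b₁ := (0:ℝ)) (b₂ := T) (a := (0:ℝ))
      (hInt 0 T le_rfl (by linarith)) (Set.left_mem_uIcc)
    have huicc : Set.uIcc (0:ℝ) T = Set.Icc 0 T := Set.uIcc_of_le (by linarith)
    rw [huicc] at this
    apply ContinuousOn.congr this
    intro x _
    exact hG x
  obtain ⟨t₀, ht₀mem, ht₀⟩ : ∃ t₀ ∈ Set.Icc (0:ℝ) T, G t₀ = α := by
    have := intermediate_value_Icc (by linarith : (0:ℝ) ≤ T) hGcont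
    have hmem : α ∈ Set.Icc (G 0) (G T) := by
      rw [hG0]; exact ⟨hα.le, hGT⟩
    exact this hmem
  have ht₀pos : 0 < t₀ := by
    rcases eq_or_lt_of_le ht₀mem.1 with h | h
    · exfalso; rw [← h, hG0] at ht₀; linarith
    · exact h
  have hu : Ginv α = t₀ := by rw [← ht₀, hGinv₁ t₀ ht₀pos.le]
  -- key algebraic identity: S t ^ n = G t ^ (n-1) * t for t > 0
  have hnR : (0:ℝ) < (n:ℝ) := by positivity
  have key : ∀ t, 0 < t → S t ^ (n:ℕ) = G t ^ (n - 1 : ℕ) * t := by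
    intro t ht
    have hGt := hGpos t ht
    have hdivpos : 0 < G t / t := div_pos hGt ht
    rw [hS t ht, mul_pow, ← Real.rpow_natCast ((G t / t) ^ (-(1:ℝ)/n)) n,
      ← Real.rpow_mul hdivpos.le]
    have : (-(1:ℝ)/n) * n = -1 := by field_simp
    rw [this, Real.rpow_neg_one]
    have hne : G t ≠ 0 := ne_of_gt hGt
    have hpow : G t ^ (n:ℕ) = G t ^ (n-1:ℕ) * G t := by
      conv_lhs => rw [show (n:ℕ) = (n-1) + 1 by omega]
      rw [pow_succ]
    rw [hpow, inv_div]
    field_simp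
  -- rewrite both sides
  have hFσ : F σ = G σ ^ (n-1:ℕ) * σ := by rw [hF σ hσ, key σ hσ]
  have hRHS : S (Ginv α) ^ (n:ℕ) = α ^ (n-1:ℕ) * t₀ := by
    rw [hu, key t₀ ht₀pos, ht₀]
  have hαpow : α ^ ((n:ℝ) - 1) = α ^ (n-1:ℕ) := by
    rw [← Real.rpow_natCast α (n-1)]
    congr 1
    push_cast [Nat.cast_sub (by omega : 1 ≤ n)]
    ring
  rw [hFσ, hRHS, hαpow]
  -- final inequality
  have hαk : 0 ≤ α ^ (n-1:ℕ) := by positivity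
  rcases le_or_gt σ t₀ with h | h
  · have h1 : 0 ≤ G σ ^ (n-1:ℕ) * σ := by
      have := (hGpos σ hσ).le
      positivity
    nlinarith
  · have h2 : α ≤ G σ := by rw [← ht₀]; exact hGmono t₀ σ ht₀pos.le h.le
    have h3 : α ^ (n-1:ℕ) ≤ G σ ^ (n-1:ℕ) := pow_le_pow_left₀ hα.le h2 _
    nlinarith [mul_pos ht₀pos (lt_of_lt_of_le hα (le_of_eq rfl))]
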